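/- Let K be a field admitting a ring homomorphism σ : K → ℝ, and let a, γ ∈ K satisfy σ(a) < 0 and σ(γ) < 0. Then the quaternion algebra ℍ[K, a, γ] is a division algebra: every nonzero element of ℍ[K, a, γ] is a unit. -/

import Mathlib

open Quaternion

/-- Full-diversity claim of Theorem 2: if `K` has a real embedding `σ` with
`σ a < 0` and `σ γ < 0`, then the quaternion algebra `(a, γ)_K` is division. -/
theorem quaternionAlgebra_division_of_real_embedding_neg
    {K : Type*} [Field K] (σ : K →+* ℝ) (a γ : K)
    (ha : σ a < 0) (hγ : σ γ < 0) :
    ∀ q : ℍ[K, a, γ], q ≠ 0 → IsUnit q := by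
  intro q hq
  set n : K := (q * star q).re with hn
  have hmul : q * star q = (n : ℍ[K, a, γ]) := QuaternionAlgebra.mul_star_eq_coe q
  have hmul' : star q * q = (n : ℍ[K, a, γ]) := by
    rw [star_comm_self', hmul]
  have hσn : σ n = σ q.re ^ 2 + (-σ a) * σ q.imI ^ 2 + (-σ γ) * σ q.imJ ^ 2
      + (σ a * σ γ) * σ q.imK ^ 2 := by
    simp only [hn, QuaternionAlgebra.re_mul, QuaternionAlgebra.re_star,
      QuaternionAlgebra.imI_star, QuaternionAlgebra.imJ_star, QuaternionAlgebra.imK_star,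
      map_add, map_sub, map_mul, map_neg, map_zero]
    ring
  have h1 : (0:ℝ) ≤ σ q.re ^ 2 := sq_nonneg _
  have h2 : (0:ℝ) ≤ (-σ a) * σ q.imI ^ 2 := mul_nonneg (by linarith) (sq_nonneg _)
  have h3 : (0:ℝ) ≤ (-σ γ) * σ q.imJ ^ 2 := mul_nonneg (by linarith) (sq_nonneg _)
  have h4 : (0:ℝ) ≤ (σ a * σ γ) * σ q.imK ^ 2 :=
    mul_nonneg ((mul_pos_of_neg_of_neg ha hγ).le) (sq_nonneg _)
  have hσinj : Function.Injective σ := σ.injective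
  have hpos : 0 < σ n := by
    have : q.re ≠ 0 ∨ q.imI ≠ 0 ∨ q.imJ ≠ 0 ∨ q.imK ≠ 0 := by
      by_contra h
      push_neg at h
      exact hq (QuaternionAlgebra.ext h.1 h.2.1 h.2.2.1 h.2.2.2)
    rcases this with h | h | h | h
    · have : 0 < σ q.re ^ 2 := by
        have := hσinj.ne_iff' σ.map_zero |>.mpr h
        positivity
      linarith
    · have hne : σ q.imI ≠ 0 := hσinj.ne_iff' σ.map_zero |>.mpr h
      have : 0 < (-σ a) * σ q.imI ^ 2 := mul_pos (by linarith) (by positivity)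
      linarith
    · have hne : σ q.imJ ≠ 0 := hσinj.ne_iff' σ.map_zero |>.mpr h
      have : 0 < (-σ γ) * σ q.imJ ^ 2 := mul_pos (by linarith) (by positivity)
      linarith
    · have hne : σ q.imK ≠ 0 := hσinj.ne_iff' σ.map_zero |>.mpr h
      have : 0 < (σ a * σ γ) * σ q.imK ^ 2 :=
        mul_pos (mul_pos_of_neg_of_neg ha hγ) (by positivity)
      linarith
  have hn0 : n ≠ 0 := by
    intro h
    rw [h, map_zero] at hpos
    exact lt_irrefl _ hpos
  refine isUnit_iff_exists.mpr ⟨star q * (↑n⁻¹ : ℍ[K, a, γ]), ?_, ?_⟩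
  · rw [← mul_assoc, hmul, ← QuaternionAlgebra.coe_mul, mul_inv_cancel₀ hn0,
      QuaternionAlgebra.coe_one]
  · rw [mul_assoc, QuaternionAlgebra.coe_commutes, ← mul_assoc, hmul',
      ← QuaternionAlgebra.coe_mul, mul_inv_cancel₀ hn0, QuaternionAlgebra.coe_one]
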